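/- Let f : I → ℝ be continuous on an interval I. Then f is nondecreasing on I if and only if the lower bilateral derivative D̲f(x) := liminf_{y→x} (f(y)−f(x))/(y−x) satisfies D̲f(x) ≥ 0 for all x ∈ I. -/

import Mathlib

open Filter Set

/-- The lower (bilateral) derivative of `f` at `x`, computed within the set `I`:
`liminf_{y → x, y ∈ I, y ≠ x} (f y - f x)/(y - x)`, as an extended real number. -/
noncomputable def lowerDerivOn (f : ℝ → ℝ) (I : Set ℝ) (x : ℝ) : EReal :=
  Filter.liminf (fun y => (((f y - f x) / (y - x) : ℝ) : EReal)) (nhdsWithin x (I \ {x}))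

/-- a continuous function on an interval is nondecreasing iff its lower
bilateral derivative is nonnegative everywhere. -/
theorem monotoneOn_iff_lowerDeriv_nonneg
    (I : Set ℝ) (hI : I.OrdConnected)
    (f : ℝ → ℝ) (hfc : ContinuousOn f I) :
    MonotoneOn f I ↔ ∀ x ∈ I, (0 : EReal) ≤ lowerDerivOn f I x := by
  constructor
  · intro hf x hx
    have hevq : ∀ᶠ y in nhdsWithin x (I \ {x}),
        (0 : EReal) ≤ (((f y - f x) / (y - x) : ℝ) : EReal) := by
      filter_upwards [self_mem_nhdsWithin] with y hy
      have hq : (0 : ℝ) ≤ (f y - f x) / (y - x) := by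
        rcases lt_trichotomy y x with h | h | h
        · have h1 : f y ≤ f x := hf hy.1 hx h.le
          exact div_nonneg_of_nonpos (by linarith) (by linarith)
        · exact absurd h hy.2
        · have h1 : f x ≤ f y := hf hx hy.1 h.le
          exact div_nonneg (by linarith) (by linarith)
      exact_mod_cast hq
    exact Filter.le_liminf_of_le (h := hevq)
  · intro h a ha b hb hab
    rcases eq_or_lt_of_le hab with rfl | hlt
    · exact le_refl _
    have hIcc : Icc a b ⊆ I := hI.out ha hb
    have hba : (0 : ℝ) < b - a := by linarith
    have key : ∀ ε : ℝ, 0 < ε → f a + ε * a ≤ f b + ε * b := by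
      intro ε hε
      set g : ℝ → ℝ := fun y => f y + ε * y with hg
      have hgc : ContinuousOn g (Icc a b) :=
        (hfc.mono hIcc).add (continuousOn_const.mul continuousOn_id)
      have hSclosed : IsClosed {x ∈ Icc a b | g a ≤ g x} :=
        isClosed_Icc.isClosed_le continuousOn_const hgc
      set S : Set ℝ := {x ∈ Icc a b | g a ≤ g x} with hS
      have hSne : S.Nonempty := ⟨a, ⟨le_refl a, hlt.le⟩, le_refl _⟩
      have hSbdd : BddAbove S := ⟨b, fun x hx => hx.1.2⟩
      set c := sSup S with hc
      have hcS : c ∈ S := hSclosed.csSup_mem hSne hSbdd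
      have hcI : c ∈ I := hIcc hcS.1
      by_cases hcb : c = b
      · have hgb : g a ≤ g b := hcb ▸ hcS.2
        simpa [g] using hgb
      have hclt : c < b := lt_of_le_of_ne hcS.1.2 hcb
      exfalso
      have hlim := h c hcI
      have hev : ∀ᶠ y in nhdsWithin c (I \ {c}),
          ((-ε : ℝ) : EReal) < (((f y - f c) / (y - c) : ℝ) : EReal) := by
        exact Filter.eventually_lt_of_lt_liminf
          (lt_of_lt_of_le (by exact_mod_cast (by linarith : (-ε : ℝ) < 0)) hlim)
      have hsub : Ioc c b ⊆ I \ {c} := fun y hy =>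
        ⟨hIcc ⟨hcS.1.1.trans hy.1.le, hy.2⟩, ne_of_gt hy.1⟩
      have hev2 : ∀ᶠ y in nhdsWithin c (Ioc c b),
          ((-ε : ℝ) : EReal) < (((f y - f c) / (y - c) : ℝ) : EReal) :=
        hev.filter_mono (nhdsWithin_mono c hsub)
      have hne : (nhdsWithin c (Ioc c b)).NeBot := left_nhdsWithin_Ioc_neBot hclt
      obtain ⟨y, hyq, hy⟩ := (hev2.and eventually_mem_nhdsWithin).exists
      have hyc : 0 < y - c := by have := hy.1; linarith
      have hq : (-ε : ℝ) < (f y - f c) / (y - c) := by exact_mod_cast hyq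
      have hgcy : g c < g y := by
        simp only [g]
        nlinarith [(lt_div_iff₀ hyc).mp hq]
      have hyS : y ∈ S := ⟨⟨hcS.1.1.trans hy.1.le, hy.2⟩, le_of_lt (lt_of_le_of_lt hcS.2 hgcy)⟩
      exact absurd (le_csSup hSbdd hyS) (not_le.2 hy.1)
    by_contra hcon
    push_neg at hcon
    have hε : (0 : ℝ) < (f a - f b) / (2 * (b - a)) := div_pos (by linarith) (by linarith)
    have hkey := key _ hε
    have h2 : (f a - f b) / (2 * (b - a)) * (b - a) = (f a - f b) / 2 := by
      field_simp
    nlinarith [hkey, h2]
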